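/- The product of two strictly stochastically ordered (N+1)x(N+1) stochastic matrices is strictly stochastically ordered, and any convex combination μA+(1−μ)B with μ∈(0,1) of two strictly stochastically ordered stochastic matrices is strictly stochastically ordered. -/

import Mathlib

open Finset
open Fin.NatCast

/-- Tail sum of a vector in `ℝ^{N+1}` from index `n`. -/
def tailSum (N : ℕ) (u : Fin (N+1) → ℝ) (n : ℕ) : ℝ :=
  ∑ i : Fin (N+1), if n ≤ (i : ℕ) then u i else 0

/-- A matrix is stochastic: nonnegative entries and rows summing to one. -/
def IsStochastic (N : ℕ) (A : Matrix (Fin (N+1)) (Fin (N+1)) ℝ) : Prop :=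
  (∀ i j, 0 ≤ A i j) ∧ (∀ i, ∑ j, A i j = 1)

/-- A matrix is strictly stochastically ordered: for `i > j` and all `n ∈ {1,...,N}`,
the tail sum of row `i` from `n` strictly exceeds that of row `j`. -/
def IsSSO (N : ℕ) (A : Matrix (Fin (N+1)) (Fin (N+1)) ℝ) : Prop :=
  ∀ i j : Fin (N+1), j < i → ∀ n : ℕ, 1 ≤ n → n ≤ N →
    tailSum N (A j) n < tailSum N (A i) n

lemma abel (N : ℕ) (c g : Fin (N+1) → ℝ) :
    ∑ k, c k * g k =
      (∑ k, c k) * g 0 +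
      ∑ i ∈ Finset.range N, (g ↑(i+1) - g ↑i) * tailSum N c (i+1) := by
  have h1 : ∀ k : Fin (N+1),
      g k = g 0 + ∑ i ∈ Finset.range (k:ℕ), (g ↑(i+1) - g ↑i) := by
    intro k
    rw [Finset.sum_range_sub (f := fun m => g (↑m : Fin (N+1)))]
    simp [Fin.cast_val_eq_self]
  have h2 : ∑ k, c k * g k
      = ∑ k, (c k * g 0 + ∑ i ∈ Finset.range (k:ℕ), c k * (g ↑(i+1) - g ↑i)) := by
    refine Finset.sum_congr rfl fun k _ => ?_
    rw [h1 k, mul_add, Finset.mul_sum]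
  rw [h2, Finset.sum_add_distrib, ← Finset.sum_mul]
  congr 1
  have h3 : ∀ k : Fin (N+1),
      ∑ i ∈ Finset.range (k:ℕ), c k * (g ↑(i+1) - g ↑i)
        = ∑ i ∈ Finset.range N, if (i:ℕ) < (k:ℕ) then c k * (g ↑(i+1) - g ↑i) else 0 := by
    intro k
    have hset : Finset.range (k:ℕ) = (Finset.range N).filter (fun i => i < (k:ℕ)) := by
      ext i
      simp only [Finset.mem_filter, Finset.mem_range]
      have := k.isLt
      omega
    rw [hset, Finset.sum_filter]
  rw [Finset.sum_congr rfl fun k _ => h3 k, Finset.sum_comm]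
  refine Finset.sum_congr rfl fun i _ => ?_
  rw [tailSum, Finset.mul_sum]
  refine Finset.sum_congr rfl fun k _ => ?_
  by_cases h : i + 1 ≤ (k:ℕ)
  · rw [if_pos (by omega), if_pos h]; ring
  · rw [if_neg (by omega), if_neg h, mul_zero]

lemma key (N : ℕ) (hN : 1 ≤ N) (a b g : Fin (N+1) → ℝ)
    (hsum : ∑ k, a k = ∑ k, b k)
    (hT : ∀ m : ℕ, 1 ≤ m → m ≤ N → tailSum N b m < tailSum N a m)
    (hg : ∀ i ∈ Finset.range N, g ↑i < g ↑(i+1)) :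
    ∑ k, b k * g k < ∑ k, a k * g k := by
  rw [abel, abel, hsum]
  apply add_lt_add_right
  apply Finset.sum_lt_sum_of_nonempty (Finset.nonempty_range_iff.2 (by omega))
  intro i hi
  have hi' := Finset.mem_range.mp hi
  exact mul_lt_mul_of_pos_left (hT (i+1) (by omega) (by omega))
    (sub_pos.2 (hg i hi))

lemma tail_mul (N : ℕ) (A B : Matrix (Fin (N+1)) (Fin (N+1)) ℝ) (i : Fin (N+1)) (n : ℕ) :
    tailSum N ((A * B) i) n = ∑ k, A i k * tailSum N (B k) n := by
  simp only [tailSum, Matrix.mul_apply]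
  have hj : ∀ j : Fin (N+1),
      (if n ≤ (j:ℕ) then ∑ k, A i k * B k j else 0)
        = ∑ k, if n ≤ (j:ℕ) then A i k * B k j else 0 := by
    intro j
    split_ifs
    · rfl
    · exact Finset.sum_const_zero.symm
  rw [Finset.sum_congr rfl fun j _ => hj j, Finset.sum_comm]
  refine Finset.sum_congr rfl fun k _ => ?_
  rw [Finset.mul_sum]
  refine Finset.sum_congr rfl fun j _ => ?_
  split_ifs with h
  · rfl
  · rw [mul_zero]

theorem stmt2 (N : ℕ) (A B : Matrix (Fin (N+1)) (Fin (N+1)) ℝ)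
    (hA : IsStochastic N A) (hB : IsStochastic N B)
    (hAo : IsSSO N A) (hBo : IsSSO N B) :
    IsSSO N (A * B) ∧
    ∀ μ : ℝ, 0 < μ → μ < 1 → IsSSO N (μ • A + (1 - μ) • B) := by
  constructor
  · intro i j hij n hn1 hnN
    have hN : 1 ≤ N := le_trans hn1 hnN
    rw [tail_mul, tail_mul]
    apply key N hN (A i) (A j) (fun k => tailSum N (B k) n)
    · rw [hA.2 i, hA.2 j]
    · intro m hm1 hmN; exact hAo i j hij m hm1 hmN
    · intro k hk
      have hk' := Finset.mem_range.mp hk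
      have h1 : ((↑k : Fin (N+1)) : ℕ) = k := Fin.val_cast_of_lt (by omega)
      have h2 : ((↑(k+1) : Fin (N+1)) : ℕ) = k+1 := Fin.val_cast_of_lt (by omega)
      exact hBo _ _ (by rw [Fin.lt_def, h1, h2]; omega) n hn1 hnN
  · intro μ hμ0 hμ1 i j hij n hn1 hnN
    have hlin : ∀ r : Fin (N+1),
        tailSum N ((μ • A + (1 - μ) • B) r) n
          = μ * tailSum N (A r) n + (1 - μ) * tailSum N (B r) n := by
      intro r
      simp only [tailSum, Matrix.add_apply, Matrix.smul_apply, smul_eq_mul,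
        Finset.mul_sum]
      rw [← Finset.sum_add_distrib]
      refine Finset.sum_congr rfl fun k _ => ?_
      by_cases h : n ≤ (k:ℕ) <;> simp [h]
    rw [hlin i, hlin j]
    have h1 := hAo i j hij n hn1 hnN
    have h2 := hBo i j hij n hn1 hnN
    have := mul_lt_mul_of_pos_left h1 hμ0
    have := mul_lt_mul_of_pos_left h2 (by linarith : (0:ℝ) < 1 - μ)
    linarith
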